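/- For every integer k ≥ 2 there exists a positive integer N < 106·4^k such that for every integer n ≥ N there exists a 5-free (4/3^k)-partition of n. -/

import Mathlib

/-- An `α`-partition of `n`: a finite set of distinct positive integers summing to `n`
whose reciprocals sum to `α`. -/
def IsPartition (α : ℚ) (n : ℕ) (A : Finset ℕ) : Prop :=
  (∀ a ∈ A, 0 < a) ∧ (∑ a ∈ A, a) = n ∧ (∑ a ∈ A, (1 : ℚ) / a) = α

set_option maxRecDepth 100000

namespace SAP

def Gset : List ℕ := [1,2,3,4,8,9,11,13,22,26,33,39,44,52,63,66,78,88,104,132,176]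
def Bset : List ℕ := [4,22,39,44,52,66,88]
def DD : ℕ := 36288
def zf (k : ℕ) : ℕ := 2 * 4^(k-2)

/-- Base-level goodness: a 4/9 partition containing 6, 5-free, avoiding `Gset`. -/
def BQ (n : ℕ) : Prop :=
  ∃ A : Finset ℕ, IsPartition (4/9 : ℚ) n A ∧ (∀ a ∈ A, ¬ (5 ∣ a)) ∧ 6 ∈ A ∧
    ∀ g ∈ Gset, g ∉ A

/-- Level-`k` goodness: a 4/3^k partition, 5-free, containing `3·zf k`,
avoiding `Bset · zf k`. -/
def RQ (k n : ℕ) : Prop :=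
  ∃ A : Finset ℕ, IsPartition (4/3^k : ℚ) n A ∧ (∀ a ∈ A, ¬ (5 ∣ a)) ∧
    (3 * zf k ∈ A) ∧ ∀ b ∈ Bset, b * zf k ∉ A

def chk (n : ℕ) (L : List ℕ) : Bool :=
  L.Nodup && (L.sum = n) && (L.contains 6) &&
  L.all (fun a => (decide (a ∣ DD)) && (a % 5 != 0) && !(Gset.contains a)) &&
  (9 * (L.map (fun a => DD / a)).sum = 4 * DD)

def chkAll : ℕ → List (List ℕ) → Bool
  | _, [] => true
  | n, L :: rest => chk n L && chkAll (n+1) rest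

def cd0 : List (List Nat) := [[6,12,16,18,42,56,72,84,112],[6,14,16,27,42,48,54,56,72,84],[6,12,14,24,42,48,54,108,112],[6,12,24,27,32,42,54,56,72,96],[6,18,21,24,27,28,48,54,84,112],[6,18,21,24,28,32,36,54,96,108],[6,14,21,27,28,42,48,54,72,112],[6,16,18,27,28,36,54,56,72,112],[6,12,18,24,28,32,84,96,126],[6,12,16,21,36,48,54,108,126],[6,12,14,28,32,42,72,96,126],[6,14,18,27,32,42,54,56,84,96],[6,14,16,32,36,42,48,56,84,96],[6,12,14,21,48,54,56,108,112],[6,7,21,27,56,72,81,162],[6,16,18,21,36,42,48,54,84,108],[6,14,21,27,28,32,54,72,84,96],[6,16,18,21,32,42,48,72,84,96],[6,12,14,24,36,54,56,108,126],[6,14,21,24,28,42,54,56,84,108],[6,14,16,28,36,48,54,56,72,108],[6,14,18,27,32,36,54,72,84,96],[6,14,21,27,28,36,54,56,72,126],[6,12,16,21,28,54,84,108,112],[6,14,18,24,36,42,54,56,84,108],[6,16,18,27,28,36,48,54,84,126],[6,14,18,24,32,42,56,72,84,96],[6,12,21,28,36,42,48,56,84,112],[6,12,21,27,32,42,54,7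2,84,96],[6,14,21,24,28,36,54,72,84,108],[6,14,18,28,32,36,54,56,96,108],[6,14,16,27,32,48,54,72,84,96],[6,12,16,36,42,48,54,56,72,108],[6,7,28,36,54,56,72,84,108],[6,14,16,24,42,48,54,56,84,108],[6,7,32,36,42,54,72,96,108],[6,14,21,24,27,42,54,56,84,126],[6,12,21,28,32,42,54,56,96,108],[6,14,16,18,24,56,84,112,126],[6,14,21,24,28,42,48,54,108,112],[6,21,24,27,28,32,42,54,56,72,96],[6,12,21,24,36,42,54,72,84,108],[6,12,18,32,36,42,54,56,96,108],[6,7,28,42,48,54,56,108,112],[6,14,16,24,36,48,54,72,84,108],[6,18,24,27,32,36,42,54,56,72,96],[6,12,21,27,28,48,54,72,84,112],[6,12,21,28,32,36,54,72,96,108],[6,12,14,18,54,56,72,108,126],[6,14,21,24,28,32,54,84,96,108],[6,7,27,36,54,56,72,84,126],[6,12,18,27,36,48,54,72,84,112],[6,12,16,32,42,48,54,56,96,108],[6,7,28,32,54,56,84,96,108],[6,14,18,24,32,36,54,84,96,108],[6,16,24,27,32,42,48,54,56,72,96],[6,12,18,24,42,48,56,72,84,112],[6,14,18,21,32,48,5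6,72,96,112],[6,12,14,18,48,56,84,112,126],[6,14,21,24,28,36,48,72,84,144],[6,12,18,28,36,48,54,56,108,112],[6,12,21,24,32,42,54,84,96,108],[6,12,16,32,36,48,54,72,96,108],[6,18,24,27,28,36,48,54,56,72,112],[6,14,16,24,32,48,54,84,96,108],[6,16,18,21,28,36,54,84,108,112],[6,12,14,36,42,54,56,72,84,108],[6,16,18,21,28,32,72,84,96,112],[6,21,24,27,28,36,42,48,54,56,144],[6,16,21,28,36,42,48,54,56,72,108],[6,18,21,27,32,36,42,54,72,84,96],[6,12,18,27,32,48,54,84,96,112],[6,12,16,28,42,48,56,72,84,126],[6,7,28,32,48,54,96,108,112],[6,12,16,32,36,42,56,84,96,112],[6,7,28,32,42,72,84,96,126],[6,14,16,24,36,42,56,72,84,144],[6,14,16,21,36,54,56,72,108,112],[6,18,21,27,28,42,48,54,56,84,112],[6,18,21,28,32,36,42,54,56,96,108]]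
def cd1 : List (List Nat) := [[6,16,21,27,32,42,48,54,72,84,96],[6,14,16,27,36,42,48,54,112,144],[6,12,16,28,36,54,56,72,108,112],[6,18,24,27,28,32,48,54,56,96,112],[6,12,18,24,36,48,54,84,108,112],[6,7,24,32,56,72,84,96,126],[6,12,14,32,42,54,56,84,96,108],[6,14,18,21,32,36,72,84,96,126],[6,18,21,27,28,36,48,54,72,84,112],[6,14,24,27,32,42,54,56,72,84,96],[6,7,27,32,48,54,96,112,126],[6,14,16,27,28,42,54,84,112,126],[6,12,18,28,32,36,72,84,96,126],[6,16,21,24,36,42,48,54,72,84,108],[6,16,18,32,36,42,48,54,56,96,108],[6,14,16,21,36,48,54,84,108,126],[6,12,14,32,36,54,72,84,96,108],[6,14,16,21,32,54,56,96,108,112],[6,18,21,27,28,42,48,54,56,72,144],[6,16,21,28,32,36,48,54,72,96,108],[6,16,21,27,28,42,54,56,72,84,112],[6,14,16,24,27,54,56,84,112,126],[6,12,16,28,32,54,56,96,108,112],[6,14,21,28,36,42,54,56,72,84,108],[6,12,14,28,48,54,56,84,108,112],[6,16,18,27,36,42,54,56,72,84,112],[6,12,16,24,36,54,72,84,108,1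12],[6,14,24,27,28,48,54,56,72,84,112],[6,14,24,28,32,36,54,56,72,96,108],[6,14,24,27,32,42,48,54,72,96,112],[6,14,16,28,32,36,48,84,96,168],[6,16,21,28,32,36,42,56,84,96,112],[6,12,18,24,32,48,56,96,112,126],[6,16,21,24,32,42,48,54,84,96,108],[6,16,18,28,36,42,48,56,72,84,126],[6,14,27,28,32,36,42,54,72,96,126],[6,16,21,27,32,36,48,54,72,96,126],[6,12,18,21,36,48,72,84,112,126],[6,14,16,36,42,48,54,56,72,84,108],[6,12,24,27,42,48,54,56,72,84,112],[6,12,24,32,36,42,54,56,72,96,108],[6,18,21,24,28,36,48,54,84,108,112],[6,12,14,32,36,54,56,96,108,126],[6,14,21,28,32,42,54,56,84,96,108],[6,12,16,28,32,42,72,96,112,126],[6,12,27,28,32,48,54,56,72,96,112],[6,12,16,24,32,54,84,96,108,112],[6,12,18,21,32,54,72,96,108,126],[6,14,18,32,36,42,54,56,84,96,108],[6,18,21,24,28,36,48,56,72,112,126],[6,12,24,32,36,42,48,56,84,96,112],[6,16,21,28,32,36,42,56,72,96,144],[6,12,16,24,36,54,56,108,112,126],[6,14,21,28,32,36,54,7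2,84,96,108],[6,16,18,28,32,42,48,56,84,96,126],[6,16,18,27,32,36,54,72,84,96,112],[6,16,21,27,28,36,54,56,72,112,126],[6,12,18,21,32,48,84,96,112,126],[6,14,16,32,42,48,54,56,84,96,108],[6,14,18,21,24,54,56,108,112,144],[6,16,18,24,32,42,56,72,84,96,112],[6,18,21,24,28,36,48,54,72,108,144],[6,14,16,18,32,56,84,96,112,126],[6,16,21,24,28,36,54,72,84,108,112],[6,16,18,28,32,36,54,56,96,108,112],[6,12,21,32,36,42,54,72,84,96,108],[6,14,18,28,36,48,54,56,84,108,112],[6,14,24,27,28,42,48,54,84,112,126],[6,14,16,32,36,48,54,72,84,96,108],[6,12,24,27,32,48,54,72,84,96,112],[6,14,21,27,32,36,54,72,84,96,126],[6,7,36,42,48,54,72,84,108,112],[6,12,14,32,36,48,56,96,126,144],[6,12,21,28,42,48,54,56,84,108,112],[6,14,16,18,32,54,84,96,108,144],[6,12,27,28,32,36,54,72,84,96,126],[6,21,24,27,28,42,48,54,56,72,84,112],[6,21,24,28,32,36,42,54,56,72,96,108],[6,12,18,36,42,48,54,56,84,108,112],[6,14,21,28,32,36,54,56,96,108,126]]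
def cd2 : List (List Nat) := [[6,12,18,32,42,48,56,72,84,96,112],[6,18,24,27,36,42,48,54,56,72,84,112],[6,12,16,18,54,56,72,108,112,126],[6,12,21,28,36,48,54,72,84,108,112],[6,12,14,28,42,48,54,108,126,144],[6,12,27,28,32,42,48,54,96,112,126],[6,16,18,24,28,48,54,72,84,108,126],[6,18,27,28,32,36,48,54,56,72,96,112],[6,14,16,28,36,54,56,72,84,108,112],[6,16,21,24,28,36,54,56,108,112,126],[6,14,16,32,36,42,54,72,96,108,112],[6,7,32,42,48,54,84,96,108,112],[6,16,24,32,36,42,48,54,56,72,96,108],[6,14,21,24,28,48,56,72,84,112,126],[6,21,24,27,32,36,42,54,56,72,96,126],[6,12,24,27,32,48,54,56,96,112,126],[6,16,18,24,32,36,56,72,96,112,126],[6,16,27,28,36,42,48,54,56,72,84,126],[6,14,18,28,32,42,54,72,96,108,126],[6,16,18,21,32,48,54,72,96,108,126],[6,12,16,36,42,54,56,72,84,108,112],[6,18,24,27,32,42,48,54,56,84,96,112],[6,14,16,21,24,56,81,108,112,162],[6,12,21,28,32,48,54,84,96,108,112],[6,12,16,18,48,54,84,108,112,144],[6,12,21,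24,42,48,56,72,84,112,126],[6,21,24,27,28,32,48,54,72,84,96,112],[6,18,27,28,32,36,42,54,56,84,96,126],[6,12,18,32,36,48,54,84,96,108,112],[6,12,21,28,36,48,54,56,108,112,126],[6,14,18,24,36,48,54,72,84,108,144],[6,18,24,27,32,36,48,54,72,84,96,112],[6,21,24,27,28,36,48,54,56,72,112,126],[6,16,21,24,28,32,48,84,96,112,144],[6,18,21,24,28,32,36,81,96,108,162],[6,18,21,28,36,42,48,54,56,84,108,112],[6,12,18,32,36,48,56,72,96,112,126],[6,16,21,32,36,42,48,54,72,84,96,108],[6,14,18,24,32,48,56,84,96,112,126],[6,16,18,21,28,54,56,72,108,112,126],[6,18,24,28,32,36,48,54,56,96,108,112],[6,16,18,21,32,36,72,84,96,112,126],[6,18,24,28,32,36,42,56,72,84,96,126],[6,16,24,27,32,42,54,56,72,84,96,112],[6,16,18,21,36,42,48,81,84,108,162],[6,14,16,27,32,54,56,84,96,112,126],[6,14,24,32,36,42,54,56,72,84,96,108],[6,16,27,28,32,36,48,54,72,84,96,126],[6,12,18,28,42,48,54,72,108,112,126],[6,12,18,27,42,54,56,72,84,112,144],[6,12,16,32,3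6,54,72,84,96,108,112],[6,14,27,28,32,48,54,56,72,84,96,112],[6,16,24,28,32,42,48,56,72,84,96,126],[6,14,18,21,32,54,72,84,96,108,126],[6,16,18,27,28,36,48,81,84,126,162],[6,12,21,24,32,48,72,84,96,112,126],[6,21,24,27,28,36,42,54,56,84,112,144],[6,16,21,28,36,42,54,56,72,84,108,112],[6,12,18,28,32,54,72,84,96,108,126],[6,14,18,28,32,36,56,81,96,108,162],[6,14,16,24,32,56,72,84,96,112,126],[6,14,27,32,36,42,48,54,56,84,96,144],[6,16,24,28,32,36,54,56,72,96,108,112],[6,12,27,32,42,48,54,56,72,84,96,112],[6,14,24,28,36,48,54,56,72,84,108,112],[6,18,21,28,32,36,48,54,84,96,108,112],[6,14,24,32,36,42,48,54,72,96,108,112],[6,18,21,24,36,42,48,56,72,84,112,126],[6,12,18,28,36,54,56,72,108,112,144],[6,16,27,28,32,36,42,54,72,96,112,126],[6,12,16,32,42,48,56,84,96,112,144],[6,14,27,28,36,42,48,54,72,84,112,126],[6,14,16,24,32,54,72,84,96,108,144],[6,18,21,28,32,36,48,56,72,96,112,126],[6,16,21,27,36,42,54,56,72,84,112,126],[6,1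8,21,28,32,42,48,54,56,96,108,144],[6,12,24,36,42,48,54,56,72,84,108,112],[6,14,21,32,36,48,54,56,72,96,108,112],[6,12,14,36,48,54,56,84,108,112,126],[6,16,24,27,32,36,54,56,72,96,112,126]]
def cd3 : List (List Nat) := [[6,16,18,28,42,48,54,56,72,84,108,126],[6,14,24,27,36,48,54,56,72,84,112,126],[6,12,28,32,36,48,54,56,72,96,108,112],[6,12,18,21,48,54,72,84,108,112,126],[6,14,24,28,32,48,54,56,84,96,108,112],[6,18,21,28,32,36,48,54,72,96,108,144],[6,18,21,27,28,42,54,56,72,84,112,144],[6,16,21,28,32,36,54,72,84,96,108,112],[6,14,16,18,54,56,72,84,108,112,126],[6,18,24,27,28,36,48,54,72,84,126,144],[6,12,18,27,32,54,72,81,96,108,162],[6,14,27,28,32,42,48,54,84,96,112,126],[6,12,14,32,48,54,72,84,96,108,144],[6,14,16,21,42,54,56,84,108,126,144],[6,16,21,27,32,42,54,56,84,96,112,126],[6,18,21,24,28,48,54,56,72,108,112,126],[6,12,24,32,42,48,54,56,84,96,108,112],[6,14,21,32,36,42,54,56,84,96,108,126],[6,12,14,36,48,54,56,72,108,126,144]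,[6,12,27,32,36,48,54,56,72,96,112,126],[6,21,27,28,32,42,48,54,56,72,84,96,112],[6,14,24,27,32,48,54,56,84,96,112,126],[6,12,28,32,36,42,54,56,84,96,108,126],[6,14,16,21,36,54,72,84,108,126,144],[6,16,21,27,32,36,54,72,84,96,112,126],[6,18,27,32,36,42,48,54,56,72,84,96,112],[6,12,24,32,36,48,54,72,84,96,108,112],[6,16,21,24,36,42,54,56,84,108,112,126],[6,12,16,28,36,54,72,84,108,126,144],[6,16,21,24,32,42,56,72,84,96,112,126],[6,16,18,28,32,48,54,72,84,96,108,126],[6,14,27,28,32,36,54,56,84,96,112,144],[6,16,18,32,36,42,48,56,84,96,112,144],[6,21,24,28,36,42,48,54,56,72,84,108,112],[6,12,14,32,42,54,72,96,108,112,144],[6,14,21,28,36,48,54,56,84,108,112,126],[6,12,24,32,42,48,54,56,72,96,108,144],[6,14,21,28,32,48,56,72,84,96,112,126],[6,12,14,32,48,54,56,96,108,126,144],[6,18,21,24,28,42,54,56,84,108,112,144],[6,16,18,28,36,48,54,56,72,108,112,144],[6,16,21,24,32,42,54,72,84,96,108,144],[6,14,18,32,36,48,56,72,84,96,112,126],[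6,12,27,32,36,42,54,56,84,96,112,144],[6,14,18,32,42,48,54,56,84,96,108,144],[6,24,27,28,32,36,42,48,54,72,96,112,126],[6,14,24,28,32,36,56,72,84,96,112,144],[6,12,21,36,42,48,54,56,84,108,112,126],[6,12,16,28,32,54,84,96,108,126,144],[6,12,21,32,42,48,56,72,84,96,112,126],[6,21,24,27,36,42,48,54,56,72,84,112,126],[6,16,18,27,32,48,54,72,84,96,112,144],[6,12,24,32,36,48,54,56,96,108,112,126],[6,21,24,28,32,42,48,54,56,84,96,108,112],[6,14,18,28,42,48,54,72,84,108,112,126],[6,14,21,28,36,48,54,56,72,108,126,144],[6,21,27,28,32,36,48,54,56,72,96,112,126],[6,16,18,21,42,54,56,72,84,108,112,126],[6,18,24,32,36,42,48,54,56,84,96,108,112],[6,16,21,24,28,48,54,72,84,108,112,144],[6,16,18,28,32,48,54,56,96,108,112,144],[6,12,21,32,42,48,54,72,84,96,108,144],[6,16,18,24,32,54,56,72,96,108,112,126],[6,21,24,28,32,36,48,54,72,84,96,108,112],[6,14,18,24,48,54,56,72,84,108,112,126],[6,12,18,21,32,72,84,96,112,126,144],[6,14,16,32,42,54,56,72,8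4,96,108,144],[6,12,21,36,42,48,54,56,72,108,126,144],[6,12,24,27,42,48,56,72,81,84,112,162],[6,18,21,24,28,32,54,84,96,108,112,144],[6,21,24,27,32,42,48,54,56,84,96,112,126],[6,14,21,28,32,42,54,72,96,108,112,144],[6,12,14,28,42,54,84,108,112,126,144],[6,21,24,28,32,42,48,54,56,72,96,108,144],[6,16,28,32,36,42,48,54,56,84,96,108,126],[6,14,21,28,32,48,54,56,96,108,126,144],[6,14,18,32,36,42,54,72,96,108,112,144],[6,12,21,32,36,48,54,84,96,108,112,126],[6,18,24,32,36,42,48,54,56,72,96,108,144],[6,14,21,24,36,48,54,72,84,108,126,144]]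
def cd4 : List (List Nat) := [[6,16,24,32,36,42,54,56,72,84,96,108,112],[6,12,21,28,42,54,56,72,84,108,112,144],[6,12,18,32,48,54,56,72,96,108,112,126],[6,18,27,28,36,42,48,54,56,72,84,126,144],[6,14,16,28,48,54,56,72,84,108,112,144],[6,16,21,24,28,48,54,56,108,112,126,144],[6,12,18,36,42,54,56,72,84,108,112,144],[6,16,18,21,32,54,72,84,96,108,112,126],[6,14,28,32,36,48,54,56,72,84,96,108,112],[6,21,24,28,32,36,48,54,56,96,108,112,126],[6,21,24,27,32,42,48,54,56,72,96,126,144],[6,18,21,32,36,42,48,56,72,84,96,112,126],[6,16,18,24,32,48,56,72,96,112,126,144],[6,12,27,28,32,42,54,72,96,112,126,144],[6,14,18,28,32,54,56,84,96,108,112,144],[6,16,27,32,36,42,48,54,56,84,96,112,144],[6,12,16,42,48,54,56,72,84,108,112,144],[6,12,21,32,36,48,54,72,96,108,126,144],[6,12,21,27,42,54,56,72,84,112,126,144],[6,7,32,42,54,72,84,96,108,112,144],[6,12,32,36,42,48,54,56,72,84,96,108,112],[6,14,16,27,48,54,56,72,84,112,126,144],[6,14,16,32,36,54,56,72,96,1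08,126,144],[6,18,21,32,36,42,48,54,72,84,96,108,144],[6,12,24,28,32,48,54,84,96,108,126,144],[6,14,27,32,36,48,54,56,72,84,96,112,126],[6,12,18,32,42,54,56,84,96,108,112,144],[6,12,18,36,42,48,56,81,84,108,112,162],[6,18,24,28,32,42,48,54,72,96,108,112,126],[6,18,24,27,32,42,54,56,72,84,96,112,144],[6,16,24,32,36,42,48,56,72,84,96,112,144],[6,12,21,28,32,54,72,84,96,108,112,144],[6,14,16,32,36,48,56,84,96,112,126,144],[6,18,21,24,42,48,54,56,72,84,108,112,126],[6,14,18,28,36,42,54,84,108,112,126,144],[6,16,18,21,36,48,54,84,108,112,126,144],[6,12,18,32,36,54,72,84,96,108,112,144],[6,16,18,21,32,48,72,84,96,112,126,144],[6,18,24,28,32,42,48,56,72,84,96,126,144],[6,18,21,28,32,48,54,56,72,96,108,112,126],[6,18,24,27,32,42,54,56,72,81,96,108,162],[6,14,21,24,32,42,54,96,108,112,126,144],[6,14,24,32,42,48,54,56,72,84,96,108,144],[6,18,21,28,36,42,54,56,72,84,108,112,144],[6,14,16,28,42,48,54,84,108,112,126,144],[6,16,27,28,32,42,54,56,72,84,9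6,126,144],[6,12,16,32,48,54,72,84,96,108,112,144],[6,14,18,28,32,42,72,81,96,108,126,162],[6,14,28,32,36,42,48,54,84,96,108,112,126],[6,18,21,32,36,42,48,54,56,96,108,126,144],[6,18,24,27,32,42,48,56,81,84,96,112,162],[6,16,21,32,36,42,54,56,84,96,108,112,126],[6,12,16,36,48,54,56,72,108,112,126,144],[6,16,21,28,42,48,54,56,72,84,108,112,144],[6,14,16,24,48,54,56,84,108,112,126,144],[6,18,27,28,32,36,42,54,72,96,112,126,144],[6,18,27,28,32,36,42,56,81,84,96,126,162],[6,21,28,32,36,42,48,54,56,72,84,96,108,112],[6,14,24,32,36,48,54,56,84,96,108,112,126],[6,12,21,27,32,54,72,81,96,108,126,162],[6,18,21,27,36,42,54,56,72,84,112,126,144],[6,12,21,24,36,54,72,84,108,112,126,144],[6,12,18,32,36,54,56,96,108,112,126,144],[6,18,21,24,32,48,54,72,84,96,108,112,126],[6,18,21,28,36,42,48,56,81,84,108,112,162],[6,16,27,28,32,42,48,54,72,96,112,126,144],[6,18,24,28,32,36,48,54,84,96,108,126,144],[6,12,18,32,42,48,56,81,96,108,144,162],[6,14,28,32,36,42,4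8,54,72,96,108,126,144],[6,18,24,28,32,36,48,56,81,96,108,112,162],[6,16,21,27,42,48,54,56,72,84,112,126,144],[6,16,21,32,36,42,54,56,72,96,108,126,144],[6,12,16,32,48,54,56,96,108,112,126,144],[6,18,21,28,32,36,54,72,84,96,108,112,144],[6,21,27,32,36,42,48,54,56,72,84,96,112,126],[6,16,24,27,32,48,54,56,72,96,112,126,144],[6,16,27,28,32,36,54,56,81,96,108,112,162],[6,12,18,28,42,48,72,81,108,112,126,162],[6,16,18,32,42,48,54,56,84,96,108,112,144],[6,12,16,32,36,72,81,84,96,108,112,162]]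
def cd5 : List (List Nat) := [[6,18,21,27,32,42,54,56,84,96,112,126,144],[6,16,21,32,36,42,48,56,84,96,112,126,144],[6,14,18,21,32,72,81,84,96,108,126,162],[6,16,21,28,32,48,54,72,84,96,108,112,144],[6,18,21,28,36,42,48,56,72,81,108,144,162],[6,21,24,27,28,36,42,56,81,84,112,144,162],[6,12,14,36,54,56,72,84,108,112,126,144],[6,12,18,28,32,72,81,84,96,108,126,162],[6,14,18,32,48,54,56,72,84,96,108,112,126],[6,16,21,28,36,48,54,56,72,108,112,126,144],[6,18,21,27,32,36,54,72,84,96,112,126,144],[6,16,24,28,32,36,56,72,81,96,108,112,162],[6,14,24,28,32,54,56,72,84,96,108,112,144],[6,14,21,32,42,48,54,56,84,96,108,126,144],[6,18,21,28,32,36,48,81,84,96,108,112,162],[6,18,21,24,32,42,56,72,84,96,112,126,144],[6,18,24,28,32,36,48,54,72,96,108,144,168],[6,12,18,28,36,56,72,81,108,112,144,162],[6,12,28,32,42,48,54,56,84,96,108,126,144],[6,14,27,28,32,42,54,72,84,96,112,126,144],[6,16,21,27,32,48,54,72,84,96,112,126,144],[6,24,27,28,32,42,48,54,56,72,84,96,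126,144],[6,14,16,21,48,56,72,81,108,112,144,162],[6,14,21,32,36,48,54,72,84,96,108,126,144],[6,12,24,32,42,54,56,72,84,96,108,112,144],[6,12,24,36,42,48,56,72,81,84,108,112,162],[6,12,14,32,54,56,84,96,108,112,126,144],[6,21,24,32,36,42,48,54,56,84,96,108,112,126],[6,12,28,32,36,48,54,72,84,96,108,126,144],[6,14,24,27,32,54,56,72,84,96,112,126,144],[6,14,27,28,32,42,54,72,81,96,108,126,162],[6,12,28,32,36,48,56,72,81,96,108,112,162],[6,14,24,28,36,42,54,72,84,108,112,126,144],[6,16,21,24,36,48,54,72,84,108,112,126,144],[6,16,18,32,36,48,54,56,96,108,112,126,144],[6,14,21,27,42,54,56,72,81,84,108,126,162],[6,16,21,28,32,36,72,81,84,96,108,112,162],[6,14,16,18,56,72,81,84,108,112,126,162],[6,14,27,28,32,48,54,56,81,96,108,144,162],[6,16,21,28,36,42,54,56,84,108,112,126,168],[6,12,27,32,36,48,54,81,84,96,108,112,162],[6,12,14,32,48,72,81,84,96,108,144,162],[6,14,24,27,36,48,54,72,81,84,108,144,162],[6,14,21,28,36,54,56,72,84,108,112,126,144],[6,18,21,2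4,28,48,56,72,81,108,112,126,162],[6,14,21,32,36,42,54,72,96,108,112,126,144],[6,14,21,32,36,42,56,81,84,96,108,126,162],[6,21,24,32,36,42,48,54,56,72,96,108,126,144],[6,12,27,32,36,48,56,72,81,96,112,126,162],[6,21,27,28,32,42,48,56,72,81,84,96,112,162],[6,12,28,32,36,42,54,72,96,108,112,126,144],[6,12,28,32,36,42,56,81,84,96,108,126,162],[6,14,24,28,32,42,54,84,96,108,112,126,144],[6,16,21,24,32,48,54,84,96,108,112,126,144],[6,18,27,32,36,42,48,56,72,81,84,96,112,162],[6,12,21,36,42,54,56,72,84,108,112,126,144],[6,16,18,27,36,54,56,72,81,108,112,126,162],[6,18,21,32,42,48,54,56,72,84,96,108,112,126],[6,14,16,36,48,54,56,72,84,108,112,126,144],[6,16,18,28,32,48,72,81,84,96,108,126,162],[6,18,28,32,36,42,48,54,56,84,96,108,126,144],[6,21,24,28,32,42,54,56,72,84,96,108,112,144],[6,21,24,28,36,42,48,56,72,81,84,108,112,162],[6,14,21,28,32,54,56,84,96,108,112,126,144],[6,14,21,28,36,48,56,81,84,108,112,126,162],[6,14,21,27,32,54,72,81,84,96,108,126,1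62],[6,18,24,32,36,42,54,56,72,84,96,108,112,144],[6,21,27,28,36,42,48,54,56,72,81,108,144,162],[6,14,18,32,36,54,56,84,96,108,112,126,144],[6,16,18,28,36,48,56,72,81,108,112,144,162],[6,12,27,28,32,54,72,81,84,96,108,126,162],[6,12,28,32,36,42,48,81,96,108,112,126,162],[6,12,27,32,36,42,56,81,84,96,112,144,162],[6,14,18,32,42,48,56,81,84,96,108,144,162],[6,24,27,28,32,36,42,48,72,81,96,112,126,162],[6,12,21,32,42,54,56,84,96,108,112,126,144],[6,16,24,32,42,48,54,56,72,84,96,108,112,144],[6,21,27,28,32,36,48,54,81,84,96,108,112,162],[6,21,24,27,32,42,54,56,72,84,96,112,126,144],[6,21,24,27,36,42,48,56,72,81,84,112,126,162]]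
def cd6 : List (List Nat) := [[6,16,18,27,32,48,72,81,84,96,112,144,162],[6,12,24,32,36,48,56,81,96,108,112,126,162],[6,16,28,32,36,42,54,56,72,84,96,108,126,144],[6,14,18,28,42,48,72,81,84,108,112,126,162],[6,14,24,27,32,42,54,81,96,108,112,144,162],[6,12,21,32,36,54,72,84,96,108,112,126,144],[6,16,18,21,42,56,72,81,84,108,112,126,162],[6,18,24,32,36,42,48,56,81,84,96,108,112,162],[6,16,21,24,28,48,72,81,84,108,112,144,162],[6,21,24,27,32,42,54,56,72,81,96,108,126,162],[6,12,21,32,42,48,72,81,84,96,108,144,162],[6,16,18,24,32,56,72,81,96,108,112,126,162],[6,21,24,28,32,36,48,72,81,84,96,108,112,162],[6,14,18,24,48,56,72,81,84,108,112,126,162],[6,16,27,32,36,42,54,56,81,84,96,108,112,162],[6,12,21,27,48,54,72,81,84,108,112,126,162],[6,12,21,36,42,48,56,72,81,108,126,144,162],[6,21,24,28,32,36,54,56,72,96,108,112,126,144],[6,18,21,24,28,32,81,84,96,108,112,144,162],[6,21,24,27,32,42,48,56,81,84,96,112,126,162],[6,14,16,27,54,56,72,81,84,108,112,126,162],[6,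12,14,28,42,81,84,108,112,126,144,162],[6,16,28,32,36,42,48,54,72,96,108,112,126,144],[6,16,28,32,36,42,48,56,81,84,96,108,126,162],[6,12,24,27,36,54,72,81,84,108,112,144,162],[6,14,18,32,36,42,72,81,96,108,112,144,162],[6,18,24,27,32,48,54,72,81,84,96,108,112,162],[6,16,21,36,42,48,54,56,72,84,108,112,126,144],[6,14,21,24,36,48,72,81,84,108,126,144,162],[6,16,24,32,36,42,56,72,81,84,96,108,112,162],[6,12,21,28,42,56,72,81,84,108,112,144,162],[6,12,18,32,48,56,72,81,96,108,112,126,162],[6,16,24,32,36,48,54,56,72,96,108,112,126,144],[6,14,16,28,48,56,72,81,84,108,112,144,162],[6,16,27,32,36,42,54,56,72,81,96,108,144,162],[6,12,18,36,42,56,72,81,84,108,112,144,162],[6,16,18,21,32,72,81,84,96,108,112,126,162],[6,18,21,32,36,42,54,56,84,96,108,112,126,144],[6,21,24,28,32,36,48,56,81,96,108,112,126,162],[6,21,24,27,32,42,48,56,72,81,96,126,144,162],[6,14,18,27,36,56,72,81,84,112,126,144,162],[6,18,27,28,32,42,54,56,72,84,96,112,144,168],[6,16,27,28,32,48,54,7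2,81,84,96,108,126,162],[6,14,18,28,32,56,81,84,96,108,112,144,162],[6,16,27,32,36,42,48,56,81,84,96,112,144,162],[6,12,16,42,48,56,72,81,84,108,112,144,162],[6,12,21,32,36,48,72,81,96,108,126,144,162],[6,16,21,32,42,48,54,56,84,96,108,112,126,144],[6,7,32,42,72,81,84,96,108,112,144,162],[6,12,32,36,42,48,56,72,81,84,96,108,112,162],[6,14,16,27,48,56,72,81,84,112,126,144,162],[6,21,24,27,28,42,54,56,81,84,108,112,144,162],[6,18,24,27,32,48,54,56,81,96,108,112,126,162],[6,12,24,28,32,48,81,84,96,108,126,144,162],[6,14,27,32,36,48,56,72,81,84,96,112,126,162],[6,12,18,32,42,56,81,84,96,108,112,144,162],[6,14,28,32,36,42,54,72,84,96,108,112,126,144],[6,16,21,32,36,48,54,72,84,96,108,112,126,144],[6,24,28,32,36,42,48,54,56,72,84,96,108,126,144],[6,12,24,27,32,54,72,84,96,112,126,144,168],[6,12,21,28,32,72,81,84,96,108,112,144,162],[6,21,24,27,28,36,54,72,81,84,108,112,144,162],[6,18,21,24,42,48,56,72,81,84,108,112,126,162],[6,14,18,28,36,42,81,84,108,112,126,1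44,162],[6,16,27,28,32,42,54,72,81,96,108,112,126,162],[6,12,18,32,36,72,81,84,96,108,112,144,162],[6,14,24,32,36,54,56,72,84,96,108,112,126,144],[6,18,21,27,42,48,54,56,72,81,108,126,144,162],[6,18,21,28,32,48,56,72,81,96,108,112,126,162],[6,16,21,27,42,54,56,72,81,84,108,112,126,162],[6,24,27,32,36,42,48,54,56,81,84,96,108,112,162],[6,14,24,32,42,48,56,72,81,84,96,108,144,162],[6,18,21,28,36,42,56,72,81,84,108,112,144,162],[6,14,16,28,42,48,81,84,108,112,126,144,162],[6,16,24,27,32,54,56,72,81,96,108,112,126,162],[6,12,16,32,48,72,81,84,96,108,112,144,162],[6,14,24,27,48,54,56,72,81,84,108,112,126,162],[6,14,28,32,36,42,48,81,84,96,108,112,126,162],[6,18,21,32,36,42,48,56,81,96,108,126,144,162],[6,21,24,27,32,36,42,72,81,84,96,126,162,168]]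
def cd7 : List (List Nat) := [[6,16,21,32,36,42,56,81,84,96,108,112,126,162],[6,21,24,27,28,32,54,81,84,96,108,112,144,162],[6,16,21,28,42,48,56,72,81,84,108,112,144,162],[6,14,16,24,48,56,81,84,108,112,126,144,162],[6,18,24,27,28,48,54,72,81,84,108,126,144,162],[6,24,27,32,36,42,48,54,56,72,84,96,112,126,168],[6,21,28,32,36,42,48,56,72,81,84,96,108,112,162],[6,14,24,32,36,48,56,81,84,96,108,112,126,162],[6,14,27,32,36,42,54,72,81,96,108,112,144,162],[6,18,21,27,36,42,56,72,81,84,112,126,144,162],[6,24,27,32,36,42,48,54,56,72,81,96,108,144,162]]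
def certdata : List (List Nat) := cd0 ++ cd1 ++ cd2 ++ cd3 ++ cd4 ++ cd5 ++ cd6 ++ cd7

theorem recip_list (D : ℕ) (hD : 0 < D) (L : List ℕ) (h : ∀ a ∈ L, a ∣ D) :
    (L.map fun a : ℕ => (1:ℚ)/(a:ℚ)).sum = ((L.map fun a => D / a).sum : ℕ) / (D:ℚ) := by
  induction L with
  | nil => simp
  | cons a t ih =>
    have ha : a ∣ D := h a (by simp)
    have ha0 : a ≠ 0 := by rintro rfl; rw [Nat.zero_dvd] at ha; omega
    have hih := ih (fun x hx => h x (by simp [hx]))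
    simp only [List.map_cons, List.sum_cons, hih, Nat.cast_add]
    have hcast : ((D / a : ℕ) : ℚ) = (D:ℚ)/(a:ℚ) :=
      Nat.cast_div ha (by exact_mod_cast ha0)
    rw [hcast]
    have haq : (a:ℚ) ≠ 0 := by exact_mod_cast ha0
    have hDq : (D:ℚ) ≠ 0 := by positivity
    field_simp

theorem sum_toFinset_nat (L : List ℕ) (h : L.Nodup) :
    (∑ a ∈ L.toFinset, a) = L.sum := by
  rw [List.sum_toFinset _ h]; simp

theorem chk_sound (n : ℕ) (L : List ℕ) (h : chk n L = true) : BQ n := by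
  unfold chk at h
  simp only [Bool.and_eq_true, decide_eq_true_eq, List.all_eq_true, bne_iff_ne, ne_eq,
    Bool.not_eq_true', List.contains_eq_any_beq, List.any_eq_true, beq_iff_eq,
    decide_eq_true_eq] at h
  obtain ⟨⟨⟨⟨hnd, hsum⟩, h6⟩, hall⟩, hrec⟩ := h
  refine ⟨L.toFinset, ⟨?_, ?_, ?_⟩, ?_, ?_, ?_⟩
  · intro a ha
    rw [List.mem_toFinset] at ha
    have := (hall a ha).1.2
    omega
  · rw [sum_toFinset_nat L hnd]; exact hsum
  · rw [List.sum_toFinset _ hnd]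
    rw [recip_list DD (by norm_num [DD]) L (fun a ha => (hall a ha).1.1)]
    have : ((L.map fun a => DD / a).sum : ℚ) * 9 = 4 * (DD:ℚ) := by
      exact_mod_cast congrArg (fun x : ℕ => (x : ℚ)) (by omega : (L.map fun a => DD / a).sum * 9 = 4 * DD)
    have hDq : (DD:ℚ) ≠ 0 := by norm_num [DD]
    rw [Nat.cast_list_sum, List.map_map] at this
    field_simp
    rw [Nat.cast_list_sum, List.map_map]
    linarith
  · intro a ha
    rw [List.mem_toFinset] at ha
    intro hdvd
    have h5 := (hall a ha).1.2
    omega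
  · rw [List.mem_toFinset]
    obtain ⟨x, hx, hxe⟩ := h6
    rwa [hxe]
  · intro g hg
    rw [List.mem_toFinset]
    intro hgL
    have h2 := (hall g hgL).2
    have h3 : (Gset.any fun x => g == x) = true := List.any_eq_true.mpr ⟨g, hg, by simp⟩
    rw [h2] at h3
    exact absurd h3 (by simp)


set_option maxHeartbeats 2000000 in
theorem certs_ok : chkAll 418 certdata = true := by decide

theorem certs_len : certdata.length = 571 := by decide

theorem chkAll_get (n0 : ℕ) (LL : List (List ℕ)) (h : chkAll n0 LL = true) :
    ∀ i, (hi : i < LL.length) → chk (n0 + i) (LL.get ⟨i, hi⟩) = true := by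
  induction LL generalizing n0 with
  | nil => intro i hi; simp at hi
  | cons L rest ih =>
    intro i hi
    unfold chkAll at h
    rw [Bool.and_eq_true] at h
    match i with
    | 0 => simpa using h.1
    | (j+1) =>
      have := ih (n0+1) h.2 j (by simpa using hi)
      simpa [Nat.add_comm, Nat.add_assoc, Nat.add_left_comm] using this

theorem window (n : ℕ) (h1 : 418 ≤ n) (h2 : n ≤ 988) : BQ n := by
  have hi : n - 418 < certdata.length := by rw [certs_len]; omega
  have hc := chkAll_get 418 certdata certs_ok (n - 418) hi
  have hn : 418 + (n - 418) = n := by omega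
  rw [hn] at hc
  exact chk_sound n _ hc

theorem bq_map (U : List ℕ) (hUnd : U.Nodup)
    (hUrecip : (U.map fun c : ℕ => (1:ℚ)/(c:ℚ)).sum = 2/9)
    (hU6 : 6 ∈ U)
    (hUel : ∀ u ∈ U, ¬ (5 ∣ u) ∧ u ∉ Gset ∧ 0 < u)
    (hUhalf : ∀ u ∈ U, u % 2 = 1 ∨ u / 2 ∈ Gset)
    (hGhalf : ∀ g ∈ Gset, g % 2 = 1 ∨ g / 2 ∈ Gset)
    (m : ℕ) (h : BQ m) : BQ (2 * m + U.sum) := by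
  obtain ⟨A, ⟨hpos, hsum, hrec⟩, h5, h6, hG⟩ := h
  set A' : Finset ℕ := (A.image (fun a => 2 * a)) ∪ U.toFinset with hA'
  have hinj : Set.InjOn (fun a => 2 * a) A := fun x _ y _ hxy => by dsimp at hxy; omega
  have hdisj : Disjoint (A.image (fun a => 2 * a)) U.toFinset := by
    rw [Finset.disjoint_right]
    intro u hu hmem
    rw [List.mem_toFinset] at hu
    rw [Finset.mem_image] at hmem
    obtain ⟨a, ha, hae⟩ := hmem
    rcases hUhalf u hu with hodd | hhalf
    · omega
    · have : a ∈ Gset := by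
        have : u / 2 = a := by omega
        rwa [this] at hhalf
      exact hG a this ha
  have hmemA' : ∀ x, x ∈ A' ↔ (∃ a ∈ A, 2 * a = x) ∨ x ∈ U := by
    intro x
    simp [hA', Finset.mem_union, Finset.mem_image, List.mem_toFinset]
  refine ⟨A', ⟨?_, ?_, ?_⟩, ?_, ?_, ?_⟩
  · intro x hx
    rcases (hmemA' x).mp hx with ⟨a, ha, hae⟩ | hxU
    · have := hpos a ha; omega
    · exact (hUel x hxU).2.2
  · rw [hA', Finset.sum_union hdisj, Finset.sum_image hinj, ← Finset.mul_sum, hsum,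
      List.sum_toFinset _ hUnd]
    simp
  · rw [hA', Finset.sum_union hdisj, Finset.sum_image hinj]
    rw [List.sum_toFinset _ hUnd, hUrecip]
    have : ∀ a ∈ A, (1:ℚ)/((2 * a : ℕ):ℚ) = (1/2) * ((1:ℚ)/(a:ℚ)) := by
      intro a ha
      have : (0:ℚ) < (a:ℚ) := by exact_mod_cast hpos a ha
      push_cast
      rw [mul_comm]
      rw [div_mul_eq_div_div]
      ring_nf
    rw [Finset.sum_congr rfl this, ← Finset.mul_sum, hrec]
    norm_num
  · intro x hx hdvd
    rcases (hmemA' x).mp hx with ⟨a, ha, hae⟩ | hxU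
    · have h5a := h5 a ha
      have : ¬ (5 ∣ 2 * a) := by
        intro hd
        exact h5a (((Nat.Prime.dvd_mul (by norm_num)).mp hd).resolve_left (by norm_num))
      rw [hae] at this; exact this hdvd
    · exact (hUel x hxU).1 hdvd
  · exact (hmemA' 6).mpr (Or.inr hU6)
  · intro g hg hgA'
    rcases (hmemA' g).mp hgA' with ⟨a, ha, hae⟩ | hxU
    · rcases hGhalf g hg with hodd | hhalf
      · omega
      · have : a ∈ Gset := by have : g / 2 = a := by omega
                              rwa [this] at hhalf
        exact hG a this ha
    · exact (hUel g hxU).2.1 hg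

theorem gset_half : ∀ g ∈ Gset, g % 2 = 1 ∨ g / 2 ∈ Gset := by decide

theorem bq_even (m : ℕ) (h : BQ m) : BQ (2 * m + 24) := by
  have := bq_map [6, 18] (by decide) (by norm_num) (by decide)
    (by decide) (by decide) gset_half m h
  simpa using this

theorem bq_odd (m : ℕ) (h : BQ m) : BQ (2 * m + 153) := by
  have := bq_map [6, 21, 126] (by decide) (by norm_num) (by decide)
    (by decide) (by decide) gset_half m h
  simpa using this


theorem base_all : ∀ n, 418 ≤ n → BQ n := by
  intro n
  induction n using Nat.strong_induction_on with
  | _ n ih =>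
    intro hn
    by_cases hw : n ≤ 988
    · exact window n hn hw
    · push_neg at hw
      rcases Nat.even_or_odd n with he | ho
      · obtain ⟨r, hr⟩ := he
        have h1 : 418 ≤ (n - 24)/2 := by omega
        have h2 : (n - 24)/2 < n := by omega
        have h3 := bq_even _ (ih _ h2 h1)
        have he2 : 2 * ((n - 24)/2) + 24 = n := by omega
        rwa [he2] at h3
      · obtain ⟨r, hr⟩ := ho
        have h1 : 418 ≤ (n - 153)/2 := by omega
        have h2 : (n - 153)/2 < n := by omega
        have h3 := bq_odd _ (ih _ h2 h1)
        have he2 : 2 * ((n - 153)/2) + 153 = n := by omega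
        rwa [he2] at h3

theorem zf_pos (k : ℕ) : 0 < zf k := by unfold zf; positivity
theorem zf_mod3 (k : ℕ) : zf k % 3 = 2 := by
  have : 4^(k-2) % 3 = 1 := by
    rw [Nat.pow_mod]; norm_num
  unfold zf
  omega
theorem zf_not5 (k : ℕ) : ¬ (5 ∣ zf k) := by
  intro h
  unfold zf at h
  rcases (Nat.Prime.dvd_mul (by norm_num)).mp h with h2 | h4
  · omega
  · have := Nat.Prime.dvd_of_dvd_pow (by norm_num : Nat.Prime 5) h4
    omega
theorem zf_succ {k : ℕ} (hk : 2 ≤ k) : zf (k+1) = 4 * zf k := by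
  unfold zf
  have : k + 1 - 2 = (k - 2) + 1 := by omega
  rw [this, pow_succ]; ring

theorem list_sum_mul (W : List ℕ) (z : ℕ) :
    (W.map (fun c => c * z)).sum = W.sum * z := by
  induction W with
  | nil => simp
  | cons c t ih => simp [ih, add_mul]

theorem list_recip_mul (W : List ℕ) (z : ℕ) :
    (W.map (fun c => (1:ℚ)/((c * z : ℕ):ℚ))).sum
      = (W.map fun c : ℕ => (1:ℚ)/(c:ℚ)).sum / z := by
  induction W with
  | nil => simp
  | cons c t ih =>
    simp only [List.map_cons, List.sum_cons, ih, add_div]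
    congr 1
    push_cast
    rcases eq_or_ne (c:ℚ) 0 with hc | hc
    · simp [hc]
    · rcases eq_or_ne (z:ℚ) 0 with hz | hz
      · simp [hz]
      · field_simp

theorem bclosure : ∀ b ∈ Bset, b % 3 = 0 → 4 * (b / 3) ∈ Bset := by decide

theorem stepW (k m : ℕ) (hk : 2 ≤ k) (W : List ℕ) (hWnd : W.Nodup)
    (hWrec : (W.map fun c : ℕ => (1:ℚ)/(c:ℚ)).sum = 1/9)
    (hW12 : 12 ∈ W)
    (hWel : ∀ c ∈ W, ¬ (5 ∣ c) ∧ 0 < c)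
    (hWdiv3 : ∀ c ∈ W, c % 3 = 0 → c / 3 ∈ Bset)
    (hW4B : ∀ b ∈ Bset, 4 * b ∉ W)
    (h : RQ k m) : RQ (k+1) (3 * (m - 3 * zf k) + W.sum * zf k) := by
  obtain ⟨A, ⟨hpos, hsum, hrec⟩, h5, hs, hB⟩ := h
  set z : ℕ := zf k with hz
  have hz0 : z ≠ 0 := by have := zf_pos k; omega
  have hz3 : z % 3 = 2 := zf_mod3 k
  have hz5 : ¬ (5 ∣ z) := zf_not5 k
  set s : ℕ := 3 * z with hsdef
  have hsm : s ≤ m := by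
    rw [← hsum]
    exact Finset.single_le_sum (f := fun a => a) (fun i _ => Nat.zero_le i) hs
  set Y : Finset ℕ := (W.map (fun c => c * z)).toFinset with hY
  set X : Finset ℕ := (A.erase s).image (fun a => 3 * a) with hX
  have hYnd : (W.map (fun c => c * z)).Nodup := by
    refine List.Nodup.map ?_ hWnd
    intro x y hxy
    exact Nat.eq_of_mul_eq_mul_right (zf_pos k) hxy
  have hmemY : ∀ x, x ∈ Y ↔ ∃ c ∈ W, c * z = x := by
    intro x; simp [hY, List.mem_map]
  have hmemX : ∀ x, x ∈ X ↔ ∃ a ∈ A.erase s, 3 * a = x := by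
    intro x; simp [hX, Finset.mem_image]
  have h3z : ¬ (3 ∣ z) := by omega
  have hdisj : Disjoint X Y := by
    rw [Finset.disjoint_left]
    intro u huX huY
    obtain ⟨a, haA, hae⟩ := (hmemX u).mp huX
    obtain ⟨c, hcW, hce⟩ := (hmemY u).mp huY
    have haA' : a ∈ A := Finset.mem_of_mem_erase haA
    rcases Nat.eq_zero_or_pos (c % 3) with hc3 | hc3
    · -- c divisible by 3 : a = (c/3) * z ∈ Bad
      have hb : c / 3 ∈ Bset := hWdiv3 c hcW hc3
      have : a = (c / 3) * z := by
        have h1 : 3 * a = c * z := by rw [hae, hce]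
        have h2 : c = 3 * (c / 3) := by omega
        rw [h2] at h1
        have : 3 * a = 3 * ((c/3) * z) := by rw [h1]; ring
        omega
      rw [this] at haA'
      exact hB (c/3) hb haA'
    · -- c not divisible by 3: 3 ∤ c*z but 3 ∣ 3a
      have h3d : (3:ℕ) ∣ c * z := by
        rw [hce, ← hae]; exact Dvd.intro a rfl
      rcases (Nat.Prime.dvd_mul (by norm_num)).mp h3d with hc | hzz
      · omega
      · omega
  have hinj : Set.InjOn (fun a => 3 * a) (A.erase s) := by
    intro x _ y _ hxy; dsimp at hxy; omega
  set A' : Finset ℕ := X ∪ Y with hA'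
  have hq3 : ((3:ℚ))^k ≠ 0 := by positivity
  have hqz : ((z:ℚ)) ≠ 0 := by exact_mod_cast hz0
  refine ⟨A', ⟨?_, ?_, ?_⟩, ?_, ?_, ?_⟩
  · -- positivity
    intro x hx
    rcases Finset.mem_union.mp hx with hxX | hxY
    · obtain ⟨a, ha, hae⟩ := (hmemX x).mp hxX
      have := hpos a (Finset.mem_of_mem_erase ha); omega
    · obtain ⟨c, hc, hce⟩ := (hmemY x).mp hxY
      have := (hWel c hc).2
      have := zf_pos k
      rw [← hce]
      positivity
  · -- natural sum
    rw [hA', Finset.sum_union hdisj, hX, Finset.sum_image hinj]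
    have herase : ∑ a ∈ A.erase s, a = m - s := by
      have h1 : (∑ a ∈ A.erase s, a) + s = m := by
        simpa [hsum] using Finset.sum_erase_add A (fun a => a) hs
      omega
    rw [← Finset.mul_sum, herase, hY, List.sum_toFinset _ hYnd, List.map_map]
    have hcomp : ((fun a : ℕ => a) ∘ fun c : ℕ => c * z) = fun c : ℕ => c * z := rfl
    rw [hcomp, list_sum_mul]
  · -- reciprocal sum
    rw [hA', Finset.sum_union hdisj, hX, Finset.sum_image hinj]
    have hstep : ∀ a ∈ A.erase s, (1:ℚ)/((3 * a : ℕ):ℚ) = (1/3) * ((1:ℚ)/(a:ℚ)) := by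
      intro a ha
      push_cast
      rcases eq_or_ne (a:ℚ) 0 with h0 | h0
      · simp [h0]
      · field_simp
    rw [Finset.sum_congr rfl hstep, ← Finset.mul_sum,
      Finset.sum_erase_eq_sub hs, hrec]
    have hYsum : ∑ x ∈ Y, (1:ℚ)/(x:ℚ) = (1/9) / (z:ℚ) := by
      rw [hY, List.sum_toFinset _ hYnd]
      rw [List.map_map]
      have hcomp : ((fun x : ℕ => (1:ℚ)/(x:ℚ)) ∘ fun c : ℕ => c * z)
          = fun c : ℕ => (1:ℚ)/((c * z : ℕ):ℚ) := rfl
      rw [hcomp, list_recip_mul, hWrec]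
    rw [hYsum]
    have hsq : ((s:ℚ)) = 3 * (z:ℚ) := by rw [hsdef]; push_cast; ring
    rw [hsq, pow_succ]
    field_simp
    ring
  · -- 5-free
    intro x hx hdvd
    rcases Finset.mem_union.mp hx with hxX | hxY
    · obtain ⟨a, ha, hae⟩ := (hmemX x).mp hxX
      rw [← hae] at hdvd
      rcases (Nat.Prime.dvd_mul (by norm_num)).mp hdvd with h3 | ha5
      · omega
      · exact h5 a (Finset.mem_of_mem_erase ha) ha5
    · obtain ⟨c, hc, hce⟩ := (hmemY x).mp hxY
      rw [← hce] at hdvd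
      rcases (Nat.Prime.dvd_mul (by norm_num)).mp hdvd with hc5 | hz5'
      · exact (hWel c hc).1 hc5
      · exact hz5 hz5'
  · -- 3 * zf (k+1) ∈ A'
    have : 3 * zf (k+1) = 12 * z := by rw [zf_succ hk]; ring
    rw [this]
    exact Finset.mem_union_right _ ((hmemY _).mpr ⟨12, hW12, rfl⟩)
  · -- Bad invariant at level k+1
    intro b hb hbA'
    have hzsucc : b * zf (k+1) = b * (4 * z) := by rw [zf_succ hk]
    rw [hzsucc] at hbA'
    rcases Finset.mem_union.mp hbA' with hxX | hxY
    · obtain ⟨a, ha, hae⟩ := (hmemX _).mp hxX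
      have haA : a ∈ A := Finset.mem_of_mem_erase ha
      rcases Nat.eq_zero_or_pos (b % 3) with hb3 | hb3
      · have hbb : 4 * (b / 3) ∈ Bset := bclosure b hb hb3
        have : a = (4 * (b / 3)) * z := by
          have h2 : b = 3 * (b / 3) := by omega
          rw [h2] at hae
          have : 3 * a = 3 * ((4 * (b/3)) * z) := by rw [hae]; ring
          omega
        rw [this] at haA
        exact hB _ hbb haA
      · have h3d : (3:ℕ) ∣ b * (4 * z) := by rw [← hae]; exact Dvd.intro a rfl
        rcases (Nat.Prime.dvd_mul (by norm_num)).mp h3d with hdb | hd4z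
        · omega
        · rcases (Nat.Prime.dvd_mul (by norm_num)).mp hd4z with h34 | h3zz
          · omega
          · omega
    · obtain ⟨c, hc, hce⟩ := (hmemY _).mp hxY
      have : c = 4 * b := by
        have : c * z = (4 * b) * z := by rw [hce]; ring
        exact Nat.eq_of_mul_eq_mul_right (zf_pos k) this
      rw [this] at hc
      exact hW4B b hb hc

def V0 : List ℕ := [12,66,132,198]
def V1 : List ℕ := [12,44,198]
def V2 : List ℕ := [12,52,117]

def Nf (k : ℕ) : ℕ := 798 * 4^(k-2) - 380 * 3^(k-2)

theorem pow34 (j : ℕ) : 3^j ≤ 4^j := Nat.pow_le_pow_left (by norm_num) j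

theorem Nf_succ {k : ℕ} (hk : 2 ≤ k) : Nf (k+1) = 3 * Nf k + 399 * zf k := by
  unfold Nf zf
  have h : k+1-2 = (k-2)+1 := by omega
  rw [h, pow_succ, pow_succ]
  have := pow34 (k-2)
  omega

theorem Nf_ge (k : ℕ) : 3 * zf k ≤ Nf k := by
  unfold Nf zf
  have := pow34 (k-2)
  omega

theorem Nf_pos (k : ℕ) : 0 < Nf k := by
  unfold Nf
  have h1 := pow34 (k-2)
  have h2 : 0 < (3:ℕ)^(k-2) := Nat.pow_pos (by norm_num)
  omega

theorem Nf_lt (k : ℕ) (hk : 2 ≤ k) : Nf k < 106 * 4^k := by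
  unfold Nf
  have hk2 : k - 2 + 2 = k := by omega
  have h4 : 0 < (4:ℕ)^(k-2) := Nat.pow_pos (by norm_num)
  have e : (4:ℕ)^k = 4^(k-2) * 16 := by
    rw [← hk2, pow_add]; norm_num
  omega

theorem rq2 (n : ℕ) (h : BQ n) : RQ 2 n := by
  obtain ⟨A, ⟨hpos, hsum, hrec⟩, h5, h6, hG⟩ := h
  refine ⟨A, ⟨hpos, hsum, ?_⟩, h5, ?_, ?_⟩
  · rw [hrec]; norm_num
  · have : 3 * zf 2 = 6 := by decide
    rw [this]; exact h6
  · have hfact : ∀ b ∈ Bset, b * 2 ∈ Gset := by decide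
    intro b hb
    have h2 : b * zf 2 = b * 2 := by norm_num [zf]
    rw [h2]
    exact hG _ (hfact b hb)

theorem levels (k : ℕ) (hk : 2 ≤ k) : ∀ n, Nf k ≤ n → RQ k n := by
  induction k, hk using Nat.le_induction with
  | base =>
    intro n hn
    have h418 : Nf 2 = 418 := by norm_num [Nf]
    exact rq2 n (base_all n (by omega))
  | succ k hk ih =>
    intro n hn
    rw [Nf_succ hk] at hn
    set z : ℕ := zf k with hzdef
    have hz3 : z % 3 = 2 := zf_mod3 k
    have hge : 3 * z ≤ Nf k := Nf_ge k
    have hmod : n % 3 = 0 ∨ n % 3 = 1 ∨ n % 3 = 2 := by omega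
    rcases hmod with h0 | h1 | h2
    · -- V0, Δ = 399
      set m : ℕ := (n - 399 * z) / 3 with hm
      have hmeq : n = 3 * m + 399 * z ∧ Nf k ≤ m := by constructor <;> omega
      have h := stepW k m hk V0 (by decide) (by norm_num [V0]) (by decide)
        (by decide) (by decide) (by decide) (ih m hmeq.2)
      have hs : V0.sum = 408 := by decide
      rw [hs] at h
      have : 3 * (m - 3 * z) + 408 * z = n := by omega
      rwa [this] at h
    · -- V1, Δ = 245
      set m : ℕ := (n - 245 * z) / 3 with hm
      have hmeq : n = 3 * m + 245 * z ∧ Nf k ≤ m := by constructor <;> omega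
      have h := stepW k m hk V1 (by decide) (by norm_num [V1]) (by decide)
        (by decide) (by decide) (by decide) (ih m hmeq.2)
      have hs : V1.sum = 254 := by decide
      rw [hs] at h
      have : 3 * (m - 3 * z) + 254 * z = n := by omega
      rwa [this] at h
    · -- V2, Δ = 172
      set m : ℕ := (n - 172 * z) / 3 with hm
      have hmeq : n = 3 * m + 172 * z ∧ Nf k ≤ m := by constructor <;> omega
      have h := stepW k m hk V2 (by decide) (by norm_num [V2]) (by decide)
        (by decide) (by decide) (by decide) (ih m hmeq.2)
      have hs : V2.sum = 181 := by decide
      rw [hs] at h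
      have : 3 * (m - 3 * z) + 181 * z = n := by omega
      rwa [this] at h


end SAP

/-- For every `k ≥ 2` there is a positive integer `N < 106·4^k` such that every
`n ≥ N` admits a `5`-free `(4/3^k)`-partition. -/
theorem small_alpha_partitions (k : ℕ) (hk : 2 ≤ k) :
    ∃ N : ℕ, 0 < N ∧ N < 106 * 4 ^ k ∧ ∀ n : ℕ, N ≤ n →
      ∃ C : Finset ℕ, IsPartition (4 / 3 ^ k : ℚ) n C ∧ ∀ a ∈ C, ¬ (5 ∣ a) := by
  refine ⟨SAP.Nf k, SAP.Nf_pos k, SAP.Nf_lt k hk, fun n hn => ?_⟩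
  obtain ⟨A, hpart, h5, _, _⟩ := SAP.levels k hk n hn
  exact ⟨A, hpart, h5⟩
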